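/- arXiv:2002.02487 — 5 statements merged into one kernel-verified Lean document; each statement's English description precedes it below -/
import Mathlib

section
/- Fix a cluster C_ℓ and a feasible fractional LP solution (x*, z*) with coverage requirement M_ℓ. Suppose each tag j ∈ T is independently assigned to at most one cluster, with tag j assigned to cluster ℓ' with probability x*_{ℓ'}(j)/2 (and to no cluster with the remaining probability); let X_ℓ be the random set of tags assigned to cluster ℓ, and let Z_ℓ be the number of objects s_i ∈ C_ℓ with t_i ∩ X_ℓ ≠ ∅. Then E[Z_ℓ] ≥ M_ℓ/4. -/
open scoped BigOperators Classical

lemma aux_sum_prod {T : Type*} [Fintype T] [DecidableEq T] {k : ℕ} (f : T → Option (Fin k) → ℝ) :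
    ∑ a : T → Option (Fin k), ∏ j, f j (a j) = ∏ j, ∑ o, f j o := by
  classical
  have := Finset.prod_univ_sum (fun _ : T => (Finset.univ : Finset (Option (Fin k)))) f
  rw [Fintype.piFinset_univ] at this
  exact this.symm

lemma aux_prodmul {T : Type*} (F : Finset T) (q : T → ℝ) (hq0 : ∀ j ∈ F, 0 ≤ q j)
    (hq1 : ∀ j ∈ F, q j ≤ 1) :
    (∏ j ∈ F, (1 - q j)) * (1 + ∑ j ∈ F, q j) ≤ 1 := by
  classical
  induction F using Finset.induction_on with
  | empty => simp
  | @insert a F ha ih =>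
    rw [Finset.prod_insert ha, Finset.sum_insert ha]
    have hP0 : 0 ≤ ∏ j ∈ F, (1 - q j) :=
      Finset.prod_nonneg fun j hj => by
        have := hq1 j (Finset.mem_insert_of_mem hj); linarith
    have hS0 : 0 ≤ ∑ j ∈ F, q j :=
      Finset.sum_nonneg fun j hj => hq0 j (Finset.mem_insert_of_mem hj)
    have ihh := ih (fun j hj => hq0 j (Finset.mem_insert_of_mem hj))
      (fun j hj => hq1 j (Finset.mem_insert_of_mem hj))
    have ha0 := hq0 a (Finset.mem_insert_self a F)
    have ha1 := hq1 a (Finset.mem_insert_self a F)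
    nlinarith [mul_nonneg (mul_nonneg hP0 ha0) hS0, mul_nonneg hP0 (mul_nonneg ha0 ha0)]

lemma aux_anal {T : Type*} (F : Finset T) (q : T → ℝ) (hq0 : ∀ j ∈ F, 0 ≤ q j)
    (hq1 : ∀ j ∈ F, q j ≤ 1) (zi : ℝ) (h0 : 0 ≤ zi) (h1 : zi ≤ 1)
    (hc : zi / 2 ≤ ∑ j ∈ F, q j) :
    zi / 4 ≤ 1 - ∏ j ∈ F, (1 - q j) := by
  have h2 := aux_prodmul F q hq0 hq1
  have hP0 : 0 ≤ ∏ j ∈ F, (1 - q j) :=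
    Finset.prod_nonneg fun j hj => by have := hq1 j hj; linarith
  nlinarith [mul_nonneg hP0 (by linarith : (0:ℝ) ≤ ∑ j ∈ F, q j - zi / 2),
    mul_nonneg h0 (by linarith : (0:ℝ) ≤ 1 - zi)]

/-- Fix a cluster `C ℓ` and a feasible fractional LP solution `(x, z)`
with coverage requirement `M ℓ`.  Each tag `j` is independently assigned to at most one
cluster, to cluster `ℓ'` with probability `x ℓ' j / 2` (and to no cluster with the
remaining probability); the probability of a full assignment `a : T → Option (Fin k)` is
the product of the per-tag probabilities.  `Z ℓ`, the number of objects of `C ℓ` covered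
by the tags assigned to `ℓ`, satisfies `E[Z ℓ] ≥ M ℓ / 4`. -/
theorem stmt0 {S T : Type*} [Fintype S] [Fintype T] [DecidableEq S] [DecidableEq T]
    {k : ℕ} (C : Fin k → Finset S) (t : S → Finset T)
    (M : Fin k → ℝ) (x : Fin k → T → ℝ) (z : S → ℝ)
    (hpart : ∀ i : S, ∃! ℓ : Fin k, i ∈ C ℓ)
    (hx0 : ∀ ℓ j, 0 ≤ x ℓ j) (hx1 : ∀ ℓ j, x ℓ j ≤ 1)
    (hz0 : ∀ i, 0 ≤ z i) (hz1 : ∀ i, z i ≤ 1)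
    (hcov : ∀ ℓ, ∀ i ∈ C ℓ, z i ≤ ∑ j ∈ t i, x ℓ j)
    (hM : ∀ ℓ, M ℓ ≤ ∑ i ∈ C ℓ, z i)
    (hone : ∀ j, ∑ ℓ, x ℓ j ≤ 1)
    (ℓ : Fin k)
    (prob : (T → Option (Fin k)) → ℝ)
    (hprob : ∀ a, prob a =
      ∏ j, (match a j with
        | some ℓ' => x ℓ' j / 2
        | none => 1 - (∑ ℓ', x ℓ' j) / 2)) :
    M ℓ / 4 ≤ ∑ a : T → Option (Fin k),
      prob a * (((C ℓ).filter fun i => ∃ j ∈ t i, a j = some ℓ).card : ℝ) := by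
  classical
  set w : T → Option (Fin k) → ℝ := fun j o => (match o with
    | some ℓ' => x ℓ' j / 2
    | none => 1 - (∑ ℓ', x ℓ' j) / 2) with hw
  have hprob' : ∀ a, prob a = ∏ j, w j (a j) := fun a => hprob a
  have hw1 : ∀ j, ∑ o : Option (Fin k), w j o = 1 := by
    intro j
    rw [Fintype.sum_option]
    simp only [hw]
    rw [← Finset.sum_div]
    ring
  -- per-object coverage probability
  have main : ∀ i ∈ C ℓ, z i / 4 ≤ ∑ a : T → Option (Fin k),
      prob a * (if ∃ j ∈ t i, a j = some ℓ then (1:ℝ) else 0) := by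
    intro i hi
    set h : T → Option (Fin k) → ℝ := fun j o => if j ∈ t i ∧ o = some ℓ then 0 else w j o
      with hh
    have e1 : ∀ a : T → Option (Fin k),
        prob a * (if ∃ j ∈ t i, a j = some ℓ then (1:ℝ) else 0)
        = ∏ j, w j (a j) - ∏ j, h j (a j) := by
      intro a
      by_cases hc : ∃ j ∈ t i, a j = some ℓ
      · obtain ⟨j0, hj0, hj0'⟩ := hc
        rw [hprob' a, if_pos ⟨j0, hj0, hj0'⟩, mul_one]
        have hz : ∏ j, h j (a j) = 0 :=
          Finset.prod_eq_zero (Finset.mem_univ j0) (by simp [hh, hj0, hj0'])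
        rw [hz, sub_zero]
      · rw [if_neg hc, mul_zero]
        have hz : ∏ j, h j (a j) = ∏ j, w j (a j) :=
          Finset.prod_congr rfl (fun j _ => by
            have hn : ¬(j ∈ t i ∧ a j = some ℓ) := fun ⟨h1, h2⟩ => hc ⟨j, h1, h2⟩
            simp [hh, hn])
        rw [hz, sub_self]
    rw [Finset.sum_congr rfl (fun a _ => e1 a), Finset.sum_sub_distrib,
      aux_sum_prod w, aux_sum_prod h]
    have hh1 : ∀ j, ∑ o : Option (Fin k), h j o = if j ∈ t i then 1 - x ℓ j / 2 else 1 := by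
      intro j
      by_cases hj : j ∈ t i
      · rw [if_pos hj, Fintype.sum_option]
        have h2 : ∑ ℓ' : Fin k, h j (some ℓ')
            = ∑ ℓ' : Fin k, (x ℓ' j / 2 - if ℓ' = ℓ then x ℓ j / 2 else 0) :=
          Finset.sum_congr rfl (fun ℓ' _ => by
            by_cases hℓ : ℓ' = ℓ <;> simp [hh, hw, hj, hℓ])
        rw [h2, Finset.sum_sub_distrib,
          Finset.sum_ite_eq' Finset.univ ℓ (fun _ => x ℓ j / 2), if_pos (Finset.mem_univ ℓ)]
        have h3 : h j none = 1 - (∑ ℓ' : Fin k, x ℓ' j) / 2 := by simp [hh, hw]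
        rw [h3, ← Finset.sum_div]
        ring
      · rw [if_neg hj]
        have : ∀ o, h j o = w j o := fun o => by simp [hh, hj]
        simp only [this]
        exact hw1 j
    rw [Finset.prod_congr rfl (fun j _ => hw1 j), Finset.prod_const_one,
      Finset.prod_congr rfl (fun j _ => hh1 j), Finset.prod_ite_mem, Finset.univ_inter]
    refine aux_anal (t i) (fun j => x ℓ j / 2) (fun j _ => by linarith [hx0 ℓ j])
      (fun j _ => by linarith [hx1 ℓ j]) (z i) (hz0 i) (hz1 i) ?_
    rw [← Finset.sum_div]
    linarith [hcov ℓ i hi]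
  -- assemble
  have step : M ℓ / 4 ≤ ∑ i ∈ C ℓ, z i / 4 := by
    rw [← Finset.sum_div]
    linarith [hM ℓ]
  refine step.trans ((Finset.sum_le_sum main).trans_eq ?_)
  rw [Finset.sum_comm]
  refine Finset.sum_congr rfl fun a _ => ?_
  rw [← Finset.mul_sum]
  congr 1
  rw [Finset.card_filter]
  push_cast
  rfl
end

section
/- Let (x*, z*) be a feasible fractional LP solution with z*(i) > 0 for all s_i, and let the random set C'_ℓ ⊆ C_ℓ be formed by including each object s_i ∈ C_ℓ independently with probability z*(i). Define the random variable x'_ℓ(j) = 0 if no object of ∪_{ℓ'} C'_{ℓ'} contains tag j, and x'_ℓ(j) = (x*_ℓ(j)/2) · max{1/z*(i) : s_i ∈ C'_ℓ, j ∈ t_i} otherwise (taken as 0 if no s_i ∈ C'_ℓ has j ∈ t_i). Then for all ℓ and all j ∈ T, E[x'_ℓ(j)] ≤ η · x*_ℓ(j)/2, where η = max_{j∈T} |E(j)| and E(j) = {s_i : j ∈ t_i}. -/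
open scoped BigOperators Classical

lemma sum_pi_bool' {ι : Type*} [Fintype ι] [DecidableEq ι] (c : ι → Bool → ℝ) :
    ∑ σ : ι → Bool, ∏ i, c i (σ i) = ∏ i, (c i true + c i false) := by
  rw [← Fintype.prod_sum]
  simp [add_comm]

/-- Let `(x, z)` be a feasible fractional LP solution with `z i > 0` for
all `i`, and form the random subsets `C' ℓ ⊆ C ℓ` by including each object `i`
independently with probability `z i` (an outcome is `σ : S → Bool`, with probability the
product of per-object probabilities).  Define the random variable
`x' σ ℓ j = (x ℓ j / 2) * max {1 / z i : i ∈ C ℓ, σ i, j ∈ t i}` when this set is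
nonempty and `0` otherwise.  Then `E[x' ℓ j] ≤ η * x ℓ j / 2`, where `η` bounds
`|E(j')| = |{i : j' ∈ t i}|` for every tag `j'`. -/
theorem stmt8 {S T : Type*} [Fintype S] [Fintype T] [DecidableEq S] [DecidableEq T]
    {k : ℕ} (C : Fin k → Finset S) (t : S → Finset T)
    (x : Fin k → T → ℝ) (z : S → ℝ)
    (hpart : ∀ i : S, ∃! ℓ : Fin k, i ∈ C ℓ)
    (hx0 : ∀ ℓ j, 0 ≤ x ℓ j) (hx1 : ∀ ℓ j, x ℓ j ≤ 1)
    (hz1 : ∀ i, z i ≤ 1) (hzpos : ∀ i, 0 < z i)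
    (hcov : ∀ ℓ, ∀ i ∈ C ℓ, z i ≤ ∑ j ∈ t i, x ℓ j)
    (hone : ∀ j, ∑ ℓ, x ℓ j ≤ 1)
    (η : ℕ) (hη : ∀ j' : T, ((Finset.univ.filter fun i : S => j' ∈ t i).card ≤ η))
    (probsel : (S → Bool) → ℝ)
    (hprobsel : ∀ σ, probsel σ = ∏ i, (if σ i then z i else 1 - z i))
    (x' : (S → Bool) → Fin k → T → ℝ)
    (hx' : ∀ σ ℓ j, x' σ ℓ j =
      if h : ((C ℓ).filter fun i => σ i = true ∧ j ∈ t i).Nonempty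
      then x ℓ j / 2 *
        (((C ℓ).filter fun i => σ i = true ∧ j ∈ t i).sup' h fun i => 1 / z i)
      else 0)
    (ℓ : Fin k) (j : T) :
    ∑ σ : S → Bool, probsel σ * x' σ ℓ j ≤ (η : ℝ) * x ℓ j / 2 := by
  classical
  set F : Finset S := (C ℓ).filter (fun i => j ∈ t i) with hF
  have hprob0 : ∀ σ, 0 ≤ probsel σ := by
    intro σ; rw [hprobsel]
    refine Finset.prod_nonneg fun i _ => ?_
    by_cases h : σ i <;> simp [h, (hzpos i).le]
    linarith [hz1 i]
  have hindnn : ∀ (σ : S → Bool) (i : S), (0:ℝ) ≤ (if σ i then 1 / z i else 0) := by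
    intro σ i; by_cases h : σ i <;> simp [h, (hzpos i).le]
  -- pointwise bound
  have hpt : ∀ σ, x' σ ℓ j ≤ x ℓ j / 2 * ∑ i ∈ F, (if σ i then 1 / z i else 0) := by
    intro σ
    have hsumnn : 0 ≤ ∑ i ∈ F, (if σ i then 1 / z i else 0) :=
      Finset.sum_nonneg fun i _ => hindnn σ i
    rw [hx' σ ℓ j]
    split_ifs with h
    · refine mul_le_mul_of_nonneg_left ?_ (div_nonneg (hx0 ℓ j) (by norm_num))
      apply Finset.sup'_le
      intro i hi
      simp only [Finset.mem_filter] at hi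
      have hiF : i ∈ F := by simp [hF, hi.1, hi.2.2, Finset.mem_filter]
      have := Finset.single_le_sum (f := fun i => if σ i then 1 / z i else 0)
        (fun i _ => hindnn σ i) hiF
      simpa [hi.2.1] using this
    · exact mul_nonneg (div_nonneg (hx0 ℓ j) (by norm_num)) hsumnn
  -- expectation of each indicator term
  have hexp : ∀ i : S, ∑ σ : S → Bool, probsel σ * (if σ i then 1 / z i else 0) = 1 := by
    intro i
    have hre : ∀ σ : S → Bool, probsel σ * (if σ i then 1 / z i else 0)
        = ∏ i', ((if σ i' then z i' else 1 - z i') *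
            (if i' = i then (if σ i' then 1 / z i' else 0) else 1)) := by
      intro σ
      rw [hprobsel, Finset.prod_mul_distrib]
      congr 1
      rw [Finset.prod_ite_eq' Finset.univ i (fun i' => if σ i' then 1 / z i' else 0)]
      simp
    have key := sum_pi_bool' (fun i' b => (if b then z i' else 1 - z i') *
        (if i' = i then (if b then 1 / z i' else 0) else 1))
    simp only [if_true, if_false, Bool.false_eq_true] at key
    rw [Finset.sum_congr rfl fun σ _ => hre σ, key]
    apply Finset.prod_eq_one
    intro i' _
    by_cases h : i' = i
    · subst h
      field_simp
      simp [(hzpos i').ne']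
    · simp [h]
  -- put it together
  have hswap : ∑ σ : S → Bool, probsel σ * (x ℓ j / 2 * ∑ i ∈ F, (if σ i then 1 / z i else 0))
      = x ℓ j / 2 * (F.card : ℝ) := by
    have step1 : ∀ σ : S → Bool, probsel σ * (x ℓ j / 2 * ∑ i ∈ F, (if σ i then 1 / z i else 0))
        = ∑ i ∈ F, x ℓ j / 2 * (probsel σ * (if σ i then 1 / z i else 0)) := by
      intro σ
      rw [Finset.mul_sum, Finset.mul_sum]
      exact Finset.sum_congr rfl fun i _ => by ring
    rw [Finset.sum_congr rfl fun σ _ => step1 σ, Finset.sum_comm]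
    have step2 : ∀ i ∈ F, ∑ σ : S → Bool, x ℓ j / 2 * (probsel σ * (if σ i then 1 / z i else 0))
        = x ℓ j / 2 := by
      intro i _
      rw [← Finset.mul_sum, hexp i, mul_one]
    rw [Finset.sum_congr rfl step2, Finset.sum_const, nsmul_eq_mul, mul_comm]
  have hcard : (F.card : ℝ) ≤ η := by
    have : F ⊆ Finset.univ.filter fun i : S => j ∈ t i := by
      intro i hi
      simp only [hF, Finset.mem_filter] at hi ⊢
      exact ⟨Finset.mem_univ i, hi.2⟩
    exact_mod_cast (Finset.card_le_card this).trans (hη j)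
  calc ∑ σ : S → Bool, probsel σ * x' σ ℓ j
      ≤ ∑ σ : S → Bool, probsel σ * (x ℓ j / 2 * ∑ i ∈ F, (if σ i then 1 / z i else 0)) :=
        Finset.sum_le_sum fun σ _ => mul_le_mul_of_nonneg_left (hpt σ) (hprob0 σ)
    _ = x ℓ j / 2 * (F.card : ℝ) := hswap
    _ ≤ x ℓ j / 2 * η := by
        exact mul_le_mul_of_nonneg_left hcard (div_nonneg (hx0 ℓ j) (by norm_num))
    _ = (η : ℝ) * x ℓ j / 2 := by ring
end

section
/- Let C'_1 be a set of objects with tag sets t_i ⊆ T, let M'_1 = |C'_1|, and let x'_1(j) ∈ [0,1] for j ∈ T satisfy ∑_{j∈t_i} x'_1(j) ≥ 1/2 for every s_i ∈ C'_1. Suppose each tag j is independently included in X_1 with probability x'_1(j), and let Y_1 = |{s_i ∈ C'_1 : t_i ∩ X_1 = ∅}| be the number of uncovered objects. If Δ + 1 ≤ 0.01·M'_1/ln n, where Δ = max_i |{i' : t_i ∩ t_{i'} ≠ ∅}|, then P(Y_1 > 0.86·M'_1) ≤ 1/n. -/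
open scoped BigOperators Classical

open Finset

lemma sum_prod_bool {T : Type*} [Fintype T] [DecidableEq T] (v : T → Bool → ℝ) :
    ∑ a : T → Bool, ∏ j, v j (a j) = ∏ j, (v j false + v j true) := by
  rw [show (∏ j, (v j false + v j true)) = ∏ j, ∑ b : Bool, v j b by
    exact Finset.prod_congr rfl fun j _ => by rw [Fintype.sum_bool]; ring]
  rw [Fintype.prod_sum]

lemma expect_ind {T : Type*} [Fintype T] [DecidableEq T] (x' : T → ℝ) (U : Finset T) :
    ∑ a : T → Bool, (∏ j, if a j then x' j else 1 - x' j) *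
      (if ∀ j ∈ U, a j = false then (1:ℝ) else 0) = ∏ j ∈ U, (1 - x' j) := by
  classical
  have key : ∀ a : T → Bool,
      (∏ j, if a j then x' j else 1 - x' j) * (if ∀ j ∈ U, a j = false then (1:ℝ) else 0)
      = ∏ j, (fun (j : T) (b : Bool) => if j ∈ U then (if b then 0 else 1 - x' j)
          else (if b then x' j else 1 - x' j)) j (a j) := by
    intro a
    by_cases h : ∀ j ∈ U, a j = false
    · rw [if_pos h, mul_one]
      refine Finset.prod_congr rfl fun j _ => ?_
      by_cases hj : j ∈ U
      · simp [hj, h j hj]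
      · simp [hj]
    · rw [if_neg h, mul_zero]
      push_neg at h
      obtain ⟨j0, hj0U, hj0⟩ := h
      have ht : a j0 = true := by simpa using hj0
      refine (Finset.prod_eq_zero (Finset.mem_univ j0) ?_).symm
      simp [hj0U, ht]
  rw [Finset.sum_congr rfl fun a _ => key a,
    sum_prod_bool (fun (j : T) (b : Bool) => if j ∈ U then (if b then 0 else 1 - x' j)
          else (if b then x' j else 1 - x' j))]
  have : ∀ j : T, ((if j ∈ U then (if false then (0:ℝ) else 1 - x' j)
          else (if false then x' j else 1 - x' j)) +
        (if j ∈ U then (if true then (0:ℝ) else 1 - x' j)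
          else (if true then x' j else 1 - x' j))) = if j ∈ U then 1 - x' j else 1 := by
    intro j; by_cases hj : j ∈ U <;> simp [hj]
  rw [Finset.prod_congr rfl fun j _ => this j, Finset.prod_ite_mem, Finset.univ_inter]

section
variable {S T : Type*} [Fintype S] [Fintype T] [DecidableEq S] [DecidableEq T]

omit [Fintype S] [DecidableEq S] in
lemma expect_prod_ind (x' : T → ℝ) (t : S → Finset T) (J : Finset S)
    (hdisj : ∀ u ∈ J, ∀ v ∈ J, u ≠ v → Disjoint (t u) (t v)) :
    ∑ a : T → Bool, (∏ j, if a j then x' j else 1 - x' j) *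
      ∏ i ∈ J, (if ∀ j ∈ t i, a j = false then (1:ℝ) else 0)
    = ∏ i ∈ J, ∏ j ∈ t i, (1 - x' j) := by
  have hpt : ∀ a : T → Bool, (∏ i ∈ J, (if ∀ j ∈ t i, a j = false then (1:ℝ) else 0))
      = (if ∀ j ∈ J.biUnion t, a j = false then (1:ℝ) else 0) := by
    intro a
    by_cases h : ∀ j ∈ J.biUnion t, a j = false
    · rw [if_pos h]
      refine Finset.prod_eq_one fun i hi => ?_
      rw [if_pos fun j hj => h j (Finset.mem_biUnion.2 ⟨i, hi, hj⟩)]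
    · rw [if_neg h]
      push_neg at h
      obtain ⟨j0, hj0, hj0f⟩ := h
      obtain ⟨i0, hi0, hj0i⟩ := Finset.mem_biUnion.1 hj0
      refine Finset.prod_eq_zero hi0 ?_
      rw [if_neg]
      push_neg
      exact ⟨j0, hj0i, hj0f⟩
  rw [Finset.sum_congr rfl fun a _ => by rw [hpt a], expect_ind x' (J.biUnion t),
    Finset.prod_biUnion ?_]
  intro u hu v hv huv
  exact hdisj u hu v hv huv

omit [Fintype S] [DecidableEq S] in
lemma class_mgf (x' : T → ℝ) (t : S → Finset T) (I : Finset S)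
    (hdisj : ∀ u ∈ I, ∀ v ∈ I, u ≠ v → Disjoint (t u) (t v)) (cc : ℝ) :
    ∑ a : T → Bool, (∏ j, if a j then x' j else 1 - x' j) *
      ∏ i ∈ I, (1 + cc * (if ∀ j ∈ t i, a j = false then (1:ℝ) else 0))
    = ∏ i ∈ I, (1 + cc * ∏ j ∈ t i, (1 - x' j)) := by
  have h1 : ∀ (g : S → ℝ), (∏ i ∈ I, (1 + cc * g i))
      = ∑ K ∈ I.powerset, cc ^ (I \ K).card * ∏ i ∈ I \ K, g i := by
    intro g
    rw [Finset.prod_add]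
    refine Finset.sum_congr rfl fun K _ => ?_
    rw [Finset.prod_const_one, one_mul, Finset.prod_mul_distrib, Finset.prod_const]
  have h2 : ∀ a : T → Bool, (∏ j, if a j then x' j else 1 - x' j) *
      ∏ i ∈ I, (1 + cc * (if ∀ j ∈ t i, a j = false then (1:ℝ) else 0))
      = ∑ K ∈ I.powerset, cc ^ (I \ K).card *
          ((∏ j, if a j then x' j else 1 - x' j) *
            ∏ i ∈ I \ K, (if ∀ j ∈ t i, a j = false then (1:ℝ) else 0)) := by
    intro a
    rw [h1, Finset.mul_sum]
    exact Finset.sum_congr rfl fun K _ => by ring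
  rw [Finset.sum_congr rfl fun a _ => h2 a, Finset.sum_comm]
  rw [h1 (fun i => ∏ j ∈ t i, (1 - x' j))]
  refine Finset.sum_congr rfl fun K hK => ?_
  rw [← Finset.mul_sum]
  congr 1
  exact expect_prod_ind x' t (I \ K)
    (fun u hu v hv huv => hdisj u (Finset.sdiff_subset hu) v (Finset.sdiff_subset hv) huv)

end

set_option maxHeartbeats 1000000 in
lemma partition_aux {S T : Type*} [Fintype S] [DecidableEq S] [DecidableEq T]
    (C' : Finset S) (t : S → Finset T) (Δ : ℕ) (hΔpos : 0 < Δ)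
    (hne : ∀ i ∈ C', (t i).Nonempty)
    (hΔ : ∀ i : S, ((Finset.univ.filter fun i' : S => (t i ∩ t i').Nonempty).card ≤ Δ))
    (P : Finset S) :
    P ⊆ C' → ∃ f : S → Fin Δ,
      (∀ u ∈ P, ∀ v ∈ P, u ≠ v → f u = f v → ¬(t u ∩ t v).Nonempty) ∧
      ∀ c : Fin Δ,
        (P.filter fun v => ∀ u ∈ P, u ≠ v → f u = c → ¬(t v ∩ t u).Nonempty).card
          ≤ ∑ b : Fin Δ, min ((P.filter fun i => f i = b).card)
              (((P.filter fun i => f i = c).card) + 1) := by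
  classical
  induction P using Finset.induction_on with
  | empty => exact fun _ => ⟨fun _ => ⟨0, hΔpos⟩, by simp, by simp⟩
  | @insert a P' ha ih =>
    intro hP
    have haC : a ∈ C' := hP (Finset.mem_insert_self a P')
    have hP' : P' ⊆ C' := fun u hu => hP (Finset.mem_insert_of_mem hu)
    obtain ⟨f', hproper', hinv'⟩ := ih hP'
    set Bset : Finset (Fin Δ) := (P'.filter fun u => (t a ∩ t u).Nonempty).image f' with hBset
    have hBcard : Bset.card ≤ Δ - 1 := by
      have h1 : (P'.filter fun u => (t a ∩ t u).Nonempty) ⊆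
          (Finset.univ.filter fun i' : S => (t a ∩ t i').Nonempty).erase a := by
        intro u hu
        exact Finset.mem_erase.2 ⟨ne_of_mem_of_not_mem (Finset.mem_filter.1 hu).1 ha,
          Finset.mem_filter.2 ⟨Finset.mem_univ u, (Finset.mem_filter.1 hu).2⟩⟩
      have h2 : ((Finset.univ.filter fun i' : S => (t a ∩ t i').Nonempty).erase a).card
          ≤ Δ - 1 := by
        rw [Finset.card_erase_of_mem (Finset.mem_filter.2 ⟨Finset.mem_univ a,
          by rw [Finset.inter_self]; exact hne a haC⟩)]
        exact Nat.sub_le_sub_right (hΔ a) 1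
      exact le_trans Finset.card_image_le (le_trans (Finset.card_le_card h1) h2)
    have hsd : ((Finset.univ : Finset (Fin Δ)) \ Bset).Nonempty := by
      rw [← Finset.card_pos, Finset.card_sdiff_of_subset (Finset.subset_univ _), Finset.card_univ,
        Fintype.card_fin]
      omega
    obtain ⟨γ, hγmem, hγmin⟩ := Finset.exists_min_image _
      (fun b => (P'.filter fun i => f' i = b).card) hsd
    have hγB : γ ∉ Bset := (Finset.mem_sdiff.1 hγmem).2
    set f : S → Fin Δ := Function.update f' a γ with hf
    have hfP' : ∀ u ∈ P', f u = f' u := fun u hu =>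
      Function.update_of_ne (ne_of_mem_of_not_mem hu ha) _ _
    have hfa : f a = γ := Function.update_self a γ f'
    have hm : ∀ b : Fin Δ, ((insert a P').filter fun i => f i = b).card
        = (P'.filter fun i => f' i = b).card + if γ = b then 1 else 0 := by
      intro b
      have hfF : (P'.filter fun i => f i = b) = P'.filter fun i => f' i = b :=
        Finset.filter_congr fun u hu => by rw [hfP' u hu]
      by_cases hb : γ = b
      · rw [Finset.filter_insert, if_pos (by rw [hfa, hb]), hfF, if_pos hb,
          Finset.card_insert_of_notMem (fun h => ha (Finset.mem_filter.1 h).1)]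
      · rw [Finset.filter_insert, if_neg (by rw [hfa]; exact hb), hfF, if_neg hb, add_zero]
    have hmb : ∀ b : Fin Δ, (P'.filter fun i => f' i = b).card
        ≤ ((insert a P').filter fun i => f i = b).card := fun b => by rw [hm b]; omega
    refine ⟨f, ?_, ?_⟩
    · intro u hu v hv huv hfuv
      rcases Finset.mem_insert.1 hu with rfl | hu'
      · rcases Finset.mem_insert.1 hv with rfl | hv'
        · exact absurd rfl huv
        · intro hnon
          have hfv : f' v = γ := by rw [← hfP' v hv', ← hfuv, hfa]
          exact hγB (hfv ▸ Finset.mem_image.2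
            ⟨v, Finset.mem_filter.2 ⟨hv', hnon⟩, rfl⟩)
      · rcases Finset.mem_insert.1 hv with rfl | hv'
        · intro hnon
          have hfu : f' u = γ := by rw [← hfP' u hu', hfuv, hfa]
          exact hγB (hfu ▸ Finset.mem_image.2 ⟨u, Finset.mem_filter.2 ⟨hu',
            by rwa [Finset.inter_comm]⟩, rfl⟩)
        · exact hproper' u hu' v hv' huv (by rw [← hfP' u hu', ← hfP' v hv', hfuv])
    · intro c
      have hUsub : ((insert a P').filter fun v => ∀ u ∈ insert a P', u ≠ v → f u = c →
            ¬(t v ∩ t u).Nonempty)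
          ⊆ insert a (P'.filter fun v => ∀ u ∈ P', u ≠ v → f' u = c →
            ¬(t v ∩ t u).Nonempty) := by
        intro v hv
        obtain ⟨hvmem, hvcond⟩ := Finset.mem_filter.1 hv
        rcases Finset.mem_insert.1 hvmem with rfl | hv'
        · exact Finset.mem_insert_self _ _
        · refine Finset.mem_insert_of_mem (Finset.mem_filter.2 ⟨hv',
            fun u hu hneq hfc => ?_⟩)
          exact hvcond u (Finset.mem_insert_of_mem hu) hneq (by rw [hfP' u hu]; exact hfc)
      by_cases hblock : ∀ u ∈ insert a P', u ≠ a → f u = c → ¬(t a ∩ t u).Nonempty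
      -- case: a is unblocked for color c
      · have hcB : c ∉ Bset := by
          intro hc
          obtain ⟨u, hu, hfu⟩ := Finset.mem_image.1 hc
          obtain ⟨huP, hdep⟩ := Finset.mem_filter.1 hu
          exact hblock u (Finset.mem_insert_of_mem huP) (ne_of_mem_of_not_mem huP ha)
            (by rw [hfP' u huP]; exact hfu) hdep
        have hγc : (P'.filter fun i => f' i = γ).card ≤ (P'.filter fun i => f' i = c).card :=
          hγmin c (Finset.mem_sdiff.2 ⟨Finset.mem_univ c, hcB⟩)
        have hsum : (∑ b : Fin Δ, min ((P'.filter fun i => f' i = b).card)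
              ((P'.filter fun i => f' i = c).card + 1)) + 1
            ≤ ∑ b : Fin Δ, min (((insert a P').filter fun i => f i = b).card)
              ((((insert a P').filter fun i => f i = c).card) + 1) := by
          rw [← Finset.sum_erase_add _ _ (Finset.mem_univ γ),
            ← Finset.sum_erase_add _ (fun b => min (((insert a P').filter fun i => f i = b).card)
              ((((insert a P').filter fun i => f i = c).card) + 1)) (Finset.mem_univ γ)]
          have hterm : min ((P'.filter fun i => f' i = γ).card)
                ((P'.filter fun i => f' i = c).card + 1) + 1
              ≤ min (((insert a P').filter fun i => f i = γ).card)
                ((((insert a P').filter fun i => f i = c).card) + 1) := by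
            have e1 : ((insert a P').filter fun i => f i = γ).card
                = (P'.filter fun i => f' i = γ).card + 1 := by rw [hm γ, if_pos rfl]
            have e2 := hmb c
            omega
          have hrest : ∑ b ∈ Finset.univ.erase γ, min ((P'.filter fun i => f' i = b).card)
                ((P'.filter fun i => f' i = c).card + 1)
              ≤ ∑ b ∈ Finset.univ.erase γ,
                min (((insert a P').filter fun i => f i = b).card)
                  ((((insert a P').filter fun i => f i = c).card) + 1) :=
            Finset.sum_le_sum fun b _ => min_le_min (hmb b) (Nat.add_le_add_right (hmb c) 1)
          omega
        calc ((insert a P').filter fun v => ∀ u ∈ insert a P', u ≠ v → f u = c →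
              ¬(t v ∩ t u).Nonempty).card
            ≤ (insert a (P'.filter fun v => ∀ u ∈ P', u ≠ v → f' u = c →
              ¬(t v ∩ t u).Nonempty)).card := Finset.card_le_card hUsub
          _ ≤ (P'.filter fun v => ∀ u ∈ P', u ≠ v → f' u = c →
              ¬(t v ∩ t u).Nonempty).card + 1 := Finset.card_insert_le _ _
          _ ≤ (∑ b : Fin Δ, min ((P'.filter fun i => f' i = b).card)
              ((P'.filter fun i => f' i = c).card + 1)) + 1 :=
            Nat.add_le_add_right (hinv' c) 1
          _ ≤ _ := hsum
      -- case: a is blocked for color c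
      · have hanot : a ∉ ((insert a P').filter fun v => ∀ u ∈ insert a P', u ≠ v → f u = c →
            ¬(t v ∩ t u).Nonempty) := by
          intro hmem
          exact hblock (fun u hu hne' hfc => (Finset.mem_filter.1 hmem).2 u hu hne' hfc)
        have hsub2 : ((insert a P').filter fun v => ∀ u ∈ insert a P', u ≠ v → f u = c →
              ¬(t v ∩ t u).Nonempty)
            ⊆ (P'.filter fun v => ∀ u ∈ P', u ≠ v → f' u = c → ¬(t v ∩ t u).Nonempty) := by
          intro v hv
          rcases Finset.mem_insert.1 (hUsub hv) with rfl | h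
          · exact absurd hv hanot
          · exact h
        calc ((insert a P').filter fun v => ∀ u ∈ insert a P', u ≠ v → f u = c →
              ¬(t v ∩ t u).Nonempty).card
            ≤ (P'.filter fun v => ∀ u ∈ P', u ≠ v → f' u = c →
              ¬(t v ∩ t u).Nonempty).card := Finset.card_le_card hsub2
          _ ≤ ∑ b : Fin Δ, min ((P'.filter fun i => f' i = b).card)
              ((P'.filter fun i => f' i = c).card + 1) := hinv' c
          _ ≤ _ := Finset.sum_le_sum fun b _ =>
              min_le_min (hmb b) (Nat.add_le_add_right (hmb c) 1)

lemma partition {S T : Type*} [Fintype S] [DecidableEq S] [DecidableEq T]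
    (C' : Finset S) (t : S → Finset T) (Δ : ℕ) (hΔpos : 0 < Δ)
    (hne : ∀ i ∈ C', (t i).Nonempty)
    (hΔ : ∀ i : S, ((Finset.univ.filter fun i' : S => (t i ∩ t i').Nonempty).card ≤ Δ)) :
    ∃ f : S → Fin Δ,
      (∀ u ∈ C', ∀ v ∈ C', u ≠ v → f u = f v → ¬(t u ∩ t v).Nonempty) ∧
      ∀ c : Fin Δ, C'.card ≤ (Δ - 1) * (C'.filter fun i => f i = c).card
          + Δ * ((C'.filter fun i => f i = c).card + 1) := by
  classical
  obtain ⟨f, hp, hinv⟩ := partition_aux C' t Δ hΔpos hne hΔ C' Finset.Subset.rfl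
  refine ⟨f, hp, fun c => ?_⟩
  have hsplit := Finset.card_filter_add_card_filter_not
    (s := C') (p := fun v => ∀ u ∈ C', u ≠ v → f u = c → ¬(t v ∩ t u).Nonempty)
  have hU : (C'.filter fun v => ∀ u ∈ C', u ≠ v → f u = c → ¬(t v ∩ t u).Nonempty).card
      ≤ Δ * ((C'.filter fun i => f i = c).card + 1) := by
    calc (C'.filter fun v => ∀ u ∈ C', u ≠ v → f u = c → ¬(t v ∩ t u).Nonempty).card
        ≤ ∑ b : Fin Δ, min ((C'.filter fun i => f i = b).card)
            (((C'.filter fun i => f i = c).card) + 1) := hinv c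
      _ ≤ ∑ _b : Fin Δ, ((C'.filter fun i => f i = c).card + 1) :=
          Finset.sum_le_sum fun b _ => min_le_right _ _
      _ = Δ * ((C'.filter fun i => f i = c).card + 1) := by
          rw [Finset.sum_const, Finset.card_univ, Fintype.card_fin, smul_eq_mul]
  have hB : (C'.filter fun v => ¬ ∀ u ∈ C', u ≠ v → f u = c → ¬(t v ∩ t u).Nonempty).card
      ≤ (Δ - 1) * (C'.filter fun i => f i = c).card := by
    have hsubset : (C'.filter fun v => ¬ ∀ u ∈ C', u ≠ v → f u = c → ¬(t v ∩ t u).Nonempty)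
        ⊆ (C'.filter fun i => f i = c).biUnion
          (fun u => (Finset.univ.filter fun v => (t u ∩ t v).Nonempty).erase u) := by
      intro v hv
      obtain ⟨hvC, hvb⟩ := Finset.mem_filter.1 hv
      push_neg at hvb
      obtain ⟨u, huC, hneq, hfc, hdep⟩ := hvb
      refine Finset.mem_biUnion.2 ⟨u, Finset.mem_filter.2 ⟨huC, hfc⟩,
        Finset.mem_erase.2 ⟨fun h => hneq (h ▸ rfl), Finset.mem_filter.2
          ⟨Finset.mem_univ v, by rwa [Finset.inter_comm]⟩⟩⟩
    calc (C'.filter fun v => ¬ ∀ u ∈ C', u ≠ v → f u = c → ¬(t v ∩ t u).Nonempty).card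
        ≤ ∑ u ∈ C'.filter fun i => f i = c,
            ((Finset.univ.filter fun v => (t u ∩ t v).Nonempty).erase u).card :=
          le_trans (Finset.card_le_card hsubset) (Finset.card_biUnion_le)
      _ ≤ ∑ _u ∈ C'.filter fun i => f i = c, (Δ - 1) := by
          refine Finset.sum_le_sum fun u hu => ?_
          rw [Finset.card_erase_of_mem (Finset.mem_filter.2 ⟨Finset.mem_univ u,
            by rw [Finset.inter_self]; exact hne u (Finset.mem_filter.1 hu).1⟩)]
          exact Nat.sub_le_sub_right (hΔ u) 1
      _ = (C'.filter fun i => f i = c).card * (Δ - 1) := by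
          rw [Finset.sum_const, smul_eq_mul]
      _ = (Δ - 1) * (C'.filter fun i => f i = c).card := Nat.mul_comm _ _
  omega

set_option maxHeartbeats 3000000 in
/-- Let `C'` be a set of objects with tag sets `t i ⊆ T`, let
`M' = |C'|`, and let `x' j ∈ [0,1]` satisfy `∑_{j ∈ t i} x' j ≥ 1/2` for every `i ∈ C'`.
Each tag `j` is independently included in the random tag set with probability `x' j`
(an outcome `a : T → Bool` has probability the product of per-tag probabilities), and
`Y` counts the objects of `C'` none of whose tags are included.  If
`Δ + 1 ≤ 0.01·M'/ln n`, where `Δ` bounds the dependence degrees, then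
`P(Y > 0.86·M') ≤ 1/n`. -/
theorem stmt10 {S T : Type*} [Fintype S] [Fintype T] [DecidableEq S] [DecidableEq T]
    (C' : Finset S) (t : S → Finset T)
    (x' : T → ℝ) (hx0 : ∀ j, 0 ≤ x' j) (hx1 : ∀ j, x' j ≤ 1)
    (hsum : ∀ i ∈ C', (1 : ℝ) / 2 ≤ ∑ j ∈ t i, x' j)
    (Δ : ℕ)
    (hΔ : ∀ i : S, ((Finset.univ.filter fun i' : S => (t i ∩ t i').Nonempty).card ≤ Δ))
    (n : ℕ) (hn : 3 ≤ n)
    (hΔb : ((Δ : ℝ) + 1) ≤ 0.01 * (C'.card : ℝ) / Real.log n)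
    (prob : (T → Bool) → ℝ)
    (hprob : ∀ a, prob a = ∏ j, (if a j then x' j else 1 - x' j)) :
    ∑ a ∈ Finset.univ.filter (fun a : T → Bool =>
        0.86 * (C'.card : ℝ) < ((C'.filter fun i => ∀ j ∈ t i, a j = false).card : ℝ)),
      prob a ≤ 1 / (n : ℝ) := by
  classical
  have hprob0 : ∀ a, 0 ≤ prob a := by
    intro a; rw [hprob a]
    refine Finset.prod_nonneg fun j _ => ?_
    by_cases h : a j = true
    · rw [if_pos h]; exact hx0 j
    · rw [if_neg h]; linarith [hx1 j]
  have hn0 : (0:ℝ) < n := by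
    have : (3:ℝ) ≤ n := by exact_mod_cast hn
    linarith
  set L := Real.log n with hLdef
  have hL1 : 1 ≤ L := by
    rw [hLdef, Real.le_log_iff_exp_le hn0]
    calc Real.exp 1 ≤ 2.7182818286 := le_of_lt Real.exp_one_lt_d9
      _ ≤ 3 := by norm_num
      _ ≤ n := by exact_mod_cast hn
  have hL0 : (0:ℝ) < L := lt_of_lt_of_le one_pos hL1
  set M := C'.card with hMdef
  have hMge : 100 * ((Δ:ℝ) + 1) * L ≤ (M:ℝ) := by
    have h := (le_div_iff₀ hL0).mp hΔb
    nlinarith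
  have hM100 : (100:ℝ) ≤ (M:ℝ) := by nlinarith [Nat.cast_nonneg (α := ℝ) Δ]
  have hMpos : (0:ℝ) < (M:ℝ) := by linarith
  have hM0 : 0 < M := by exact_mod_cast hMpos
  have hCne : C'.Nonempty := Finset.card_pos.1 hM0
  have htne : ∀ i ∈ C', (t i).Nonempty := by
    intro i hi
    rcases Finset.eq_empty_or_nonempty (t i) with h | h
    · exfalso; have := hsum i hi; rw [h, Finset.sum_empty] at this; linarith
    · exact h
  have hΔ1 : 0 < Δ := by
    obtain ⟨i0, hi0⟩ := hCne
    have h0 : 0 < (Finset.univ.filter fun i' : S => (t i0 ∩ t i').Nonempty).card :=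
      Finset.card_pos.2 ⟨i0, Finset.mem_filter.2 ⟨Finset.mem_univ _,
        by rw [Finset.inter_self]; exact htne i0 hi0⟩⟩
    exact lt_of_lt_of_le h0 (hΔ i0)
  obtain ⟨f, hproper, hsize⟩ := partition C' t Δ hΔ1 htne hΔ
  set m : Fin Δ → ℕ := fun c => (C'.filter fun i => f i = c).card with hmdef
  have hmsum : ∑ c, m c = M :=
    (Finset.card_eq_sum_card_fiberwise (f := f) (fun i _ => Finset.mem_univ (f i))).symm
  have hmlb : ∀ c, 43 * L ≤ (m c : ℝ) := by
    intro c
    have h1 : (M:ℝ) ≤ ((Δ:ℝ) - 1) * m c + (Δ:ℝ) * ((m c:ℝ) + 1) := by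
      calc (M:ℝ) ≤ (((Δ-1) * m c + Δ * (m c + 1) : ℕ) : ℝ) := by exact_mod_cast hsize c
        _ = ((Δ:ℝ) - 1) * m c + (Δ:ℝ) * ((m c:ℝ) + 1) := by
            push_cast [Nat.cast_sub hΔ1]; ring
    have hΔr : (1:ℝ) ≤ (Δ:ℝ) := by exact_mod_cast hΔ1
    nlinarith [Nat.cast_nonneg (α := ℝ) (m c), mul_le_mul_of_nonneg_left hL1
      (by linarith : (0:ℝ) ≤ 14 * (Δ:ℝ))]
  -- probability of one object uncovered
  have hP0 : ∀ i : S, (0:ℝ) ≤ ∏ j ∈ t i, (1 - x' j) :=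
    fun i => Finset.prod_nonneg fun j _ => by linarith [hx1 j]
  have hPle : ∀ i ∈ C', (∏ j ∈ t i, (1 - x' j)) ≤ Real.exp (-(1/2)) := by
    intro i hi
    calc ∏ j ∈ t i, (1 - x' j) ≤ ∏ j ∈ t i, Real.exp (-(x' j)) := by
          refine Finset.prod_le_prod (fun j _ => by linarith [hx1 j]) (fun j _ => ?_)
          linarith [Real.add_one_le_exp (-(x' j))]
      _ = Real.exp (∑ j ∈ t i, -(x' j)) := (Real.exp_sum _ _).symm
      _ ≤ Real.exp (-(1/2)) := by
          rw [Real.exp_le_exp, Finset.sum_neg_distrib]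
          linarith [hsum i hi]
  have hm0 : ∀ c, (0:ℝ) < (m c : ℝ) := fun c =>
    lt_of_lt_of_le (by positivity) (hmlb c)
  set lam : Fin Δ → ℝ := fun c => 8.6 * L / (m c : ℝ) with hlamdef
  have hlam0 : ∀ c, 0 ≤ lam c := fun c => div_nonneg (by positivity) (hm0 c).le
  have hlam02 : ∀ c, lam c ≤ 0.2 := by
    intro c
    rw [hlamdef]
    rw [div_le_iff₀ (hm0 c)]
    nlinarith [hmlb c]
  have hlamm : ∀ c, lam c * (m c : ℝ) = 8.6 * L := fun c =>
    div_mul_cancel₀ _ (hm0 c).ne'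
  have hcc0 : ∀ c, 0 ≤ Real.exp (lam c) - 1 := by
    intro c
    have := Real.one_le_exp (hlam0 c)
    linarith
  have hcc : ∀ c, Real.exp (lam c) - 1 ≤ lam c * Real.exp 0.2 := by
    intro c
    have h1 : Real.exp (lam c) * (1 - lam c) ≤ 1 := by
      have h2 := Real.add_one_le_exp (-(lam c))
      calc Real.exp (lam c) * (1 - lam c) ≤ Real.exp (lam c) * Real.exp (-(lam c)) := by
            refine mul_le_mul_of_nonneg_left (by linarith) (Real.exp_pos _).le
        _ = 1 := by rw [← Real.exp_add]; simp
    have h2 : Real.exp (lam c) ≤ Real.exp 0.2 := Real.exp_le_exp.2 (hlam02 c)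
    nlinarith [hlam0 c, Real.exp_pos (lam c)]
  have hexpbound : Real.exp 0.2 * Real.exp (-(1/2)) ≤ 1 / 1.345 := by
    rw [← Real.exp_add]
    have h345 : (1.345:ℝ) ≤ Real.exp 0.3 := by
      have := Real.quadratic_le_exp_of_nonneg (show (0:ℝ) ≤ 0.3 by norm_num)
      nlinarith
    have h03 : Real.exp (0.2 + -(1/2)) = Real.exp (-(0.3:ℝ)) := by norm_num
    rw [h03, Real.exp_neg, one_div]
    exact inv_anti₀ (by norm_num) h345
  -- per-class expectation bound
  have hclass : ∀ c : Fin Δ, ∑ a : T → Bool, prob a *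
      Real.exp (lam c * (((C'.filter fun i => f i = c).filter
        fun i => ∀ j ∈ t i, a j = false).card : ℝ))
      ≤ Real.exp (8.6 * L / 1.345) := by
    intro c
    have hIdisj : ∀ u ∈ C'.filter fun i => f i = c, ∀ v ∈ C'.filter fun i => f i = c,
        u ≠ v → Disjoint (t u) (t v) := by
      intro u hu v hv huv
      rw [Finset.disjoint_iff_inter_eq_empty, ← Finset.not_nonempty_iff_eq_empty]
      exact hproper u (Finset.mem_filter.1 hu).1 v (Finset.mem_filter.1 hv).1 huv
        (((Finset.mem_filter.1 hu).2).trans ((Finset.mem_filter.1 hv).2).symm)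
    have hpt : ∀ a : T → Bool,
        Real.exp (lam c * (((C'.filter fun i => f i = c).filter
          fun i => ∀ j ∈ t i, a j = false).card : ℝ))
        = ∏ i ∈ C'.filter fun i => f i = c,
            (1 + (Real.exp (lam c) - 1) * (if ∀ j ∈ t i, a j = false then (1:ℝ) else 0)) := by
      intro a
      have hcard : (((C'.filter fun i => f i = c).filter
            fun i => ∀ j ∈ t i, a j = false).card : ℝ)
          = ∑ i ∈ C'.filter fun i => f i = c,
              (if ∀ j ∈ t i, a j = false then (1:ℝ) else 0) := by
        rw [Finset.card_filter]
        push_cast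
        rfl
      rw [hcard, Finset.mul_sum, Real.exp_sum]
      refine Finset.prod_congr rfl fun i _ => ?_
      by_cases h : ∀ j ∈ t i, a j = false
      · rw [if_pos h, mul_one, mul_one]; ring
      · rw [if_neg h, mul_zero, mul_zero, Real.exp_zero]; ring
    calc ∑ a : T → Bool, prob a * Real.exp (lam c * (((C'.filter fun i => f i = c).filter
            fun i => ∀ j ∈ t i, a j = false).card : ℝ))
        = ∑ a : T → Bool, (∏ j, if a j then x' j else 1 - x' j) *
            ∏ i ∈ C'.filter fun i => f i = c,
              (1 + (Real.exp (lam c) - 1) *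
                (if ∀ j ∈ t i, a j = false then (1:ℝ) else 0)) :=
          Finset.sum_congr rfl fun a _ => by rw [hprob a, hpt a]
      _ = ∏ i ∈ C'.filter fun i => f i = c,
            (1 + (Real.exp (lam c) - 1) * ∏ j ∈ t i, (1 - x' j)) :=
          class_mgf x' t _ hIdisj _
      _ ≤ ∏ _i ∈ C'.filter fun i => f i = c,
            Real.exp ((Real.exp (lam c) - 1) * Real.exp (-(1/2))) := by
          refine Finset.prod_le_prod (fun i _ => ?_) (fun i hi => ?_)
          · have := hP0 i; nlinarith [hcc0 c]
          · have h1 : (Real.exp (lam c) - 1) * ∏ j ∈ t i, (1 - x' j)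
                ≤ (Real.exp (lam c) - 1) * Real.exp (-(1/2)) :=
              mul_le_mul_of_nonneg_left (hPle i (Finset.mem_filter.1 hi).1) (hcc0 c)
            linarith [Real.add_one_le_exp ((Real.exp (lam c) - 1) * Real.exp (-(1/2)))]
      _ = Real.exp ((m c : ℝ) * ((Real.exp (lam c) - 1) * Real.exp (-(1/2)))) := by
          rw [Finset.prod_const, ← Real.exp_nat_mul]
      _ ≤ Real.exp (8.6 * L / 1.345) := by
          rw [Real.exp_le_exp]
          have h1 : (m c : ℝ) * ((Real.exp (lam c) - 1) * Real.exp (-(1/2)))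
              ≤ (m c : ℝ) * ((lam c * Real.exp 0.2) * Real.exp (-(1/2))) := by
            refine mul_le_mul_of_nonneg_left ?_ (hm0 c).le
            exact mul_le_mul_of_nonneg_right (hcc c) (Real.exp_pos _).le
          have h2 : (m c : ℝ) * ((lam c * Real.exp 0.2) * Real.exp (-(1/2)))
              = (8.6 * L) * (Real.exp 0.2 * Real.exp (-(1/2))) := by
            rw [← hlamm c]; ring
          have h3 : (8.6 * L) * (Real.exp 0.2 * Real.exp (-(1/2)))
              ≤ (8.6 * L) * (1 / 1.345) :=
            mul_le_mul_of_nonneg_left hexpbound (by positivity)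
          have h4 : (8.6 * L) * (1 / 1.345) = 8.6 * L / 1.345 := by ring
          linarith
  -- split of Y into classes
  have hYsplitN : ∀ a : T → Bool, (C'.filter fun i => ∀ j ∈ t i, a j = false).card
      = ∑ c : Fin Δ, ((C'.filter fun i => f i = c).filter
          fun i => ∀ j ∈ t i, a j = false).card := by
    intro a
    rw [Finset.card_eq_sum_card_fiberwise (f := f) (t := Finset.univ)
      (fun i _ => Finset.mem_univ (f i))]
    exact Finset.sum_congr rfl fun c _ => by rw [Finset.filter_comm]
  have hws : ∑ c : Fin Δ, (m c : ℝ) / (M:ℝ) = 1 := by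
    rw [← Finset.sum_div]
    have : ∑ c : Fin Δ, (m c : ℝ) = (M:ℝ) := by exact_mod_cast congrArg Nat.cast hmsum
    rw [this, div_self hMpos.ne']
  -- pointwise Jensen
  have hjensen : ∀ a : T → Bool,
      Real.exp ((8.6 * L / (M:ℝ)) * ((C'.filter fun i => ∀ j ∈ t i, a j = false).card : ℝ))
      ≤ ∑ c : Fin Δ, ((m c:ℝ)/(M:ℝ)) * Real.exp (lam c *
          (((C'.filter fun i => f i = c).filter fun i => ∀ j ∈ t i, a j = false).card : ℝ)) := by
    intro a
    have heq : (8.6 * L / (M:ℝ)) * ((C'.filter fun i => ∀ j ∈ t i, a j = false).card : ℝ)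
        = ∑ c : Fin Δ, ((m c:ℝ)/(M:ℝ)) • (lam c *
            (((C'.filter fun i => f i = c).filter
              fun i => ∀ j ∈ t i, a j = false).card : ℝ)) := by
      have hterm : ∀ c : Fin Δ, ((m c:ℝ)/(M:ℝ)) • (lam c *
            (((C'.filter fun i => f i = c).filter
              fun i => ∀ j ∈ t i, a j = false).card : ℝ))
          = (8.6 * L / (M:ℝ)) * (((C'.filter fun i => f i = c).filter
              fun i => ∀ j ∈ t i, a j = false).card : ℝ) := by
        intro c
        have h1 : (m c:ℝ) ≠ 0 := (hm0 c).ne'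
        have h2 : ((M:ℕ):ℝ) ≠ 0 := hMpos.ne'
        rw [smul_eq_mul, hlamdef]
        field_simp
      rw [Finset.sum_congr rfl fun c _ => hterm c, ← Finset.mul_sum]
      congr 1
      rw [hYsplitN a]
      push_cast
      rfl
    rw [heq]
    have hJ := (convexOn_exp).map_sum_le (t := Finset.univ)
      (w := fun c : Fin Δ => (m c:ℝ)/(M:ℝ))
      (p := fun c : Fin Δ => lam c * (((C'.filter fun i => f i = c).filter
        fun i => ∀ j ∈ t i, a j = false).card : ℝ))
      (fun c _ => by positivity) hws (fun c _ => Set.mem_univ _)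
    simpa [smul_eq_mul] using hJ
  -- the global mgf bound
  have hS : ∑ a : T → Bool, prob a *
      Real.exp ((8.6 * L / (M:ℝ)) * ((C'.filter fun i => ∀ j ∈ t i, a j = false).card : ℝ))
      ≤ Real.exp (8.6 * L / 1.345) := by
    calc ∑ a : T → Bool, prob a *
        Real.exp ((8.6 * L / (M:ℝ)) * ((C'.filter fun i => ∀ j ∈ t i, a j = false).card : ℝ))
        ≤ ∑ a : T → Bool, prob a * (∑ c : Fin Δ, ((m c:ℝ)/(M:ℝ)) * Real.exp (lam c *
            (((C'.filter fun i => f i = c).filter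
              fun i => ∀ j ∈ t i, a j = false).card : ℝ))) :=
          Finset.sum_le_sum fun a _ => mul_le_mul_of_nonneg_left (hjensen a) (hprob0 a)
      _ = ∑ c : Fin Δ, ((m c:ℝ)/(M:ℝ)) * ∑ a : T → Bool, prob a * Real.exp (lam c *
            (((C'.filter fun i => f i = c).filter
              fun i => ∀ j ∈ t i, a j = false).card : ℝ)) := by
          simp_rw [Finset.mul_sum]
          rw [Finset.sum_comm]
          exact Finset.sum_congr rfl fun c _ => Finset.sum_congr rfl fun a _ => by ring
      _ ≤ ∑ c : Fin Δ, ((m c:ℝ)/(M:ℝ)) * Real.exp (8.6 * L / 1.345) :=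
          Finset.sum_le_sum fun c _ => mul_le_mul_of_nonneg_left (hclass c) (by positivity)
      _ = Real.exp (8.6 * L / 1.345) := by rw [← Finset.sum_mul, hws, one_mul]
  -- final chain
  have hfinal : ∑ a ∈ Finset.univ.filter (fun a : T → Bool =>
        0.86 * ((M:ℕ) : ℝ) < ((C'.filter fun i => ∀ j ∈ t i, a j = false).card : ℝ)),
      prob a ≤ Real.exp (8.6 * L / 1.345) * Real.exp (-(0.86 * (8.6 * L))) := by
    calc ∑ a ∈ Finset.univ.filter (fun a : T → Bool =>
          0.86 * ((M:ℕ) : ℝ) < ((C'.filter fun i => ∀ j ∈ t i, a j = false).card : ℝ)),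
          prob a
        ≤ ∑ a ∈ Finset.univ.filter (fun a : T → Bool =>
            0.86 * ((M:ℕ) : ℝ) < ((C'.filter fun i => ∀ j ∈ t i, a j = false).card : ℝ)),
            prob a * (Real.exp ((8.6 * L / (M:ℝ)) *
              ((C'.filter fun i => ∀ j ∈ t i, a j = false).card : ℝ)) *
                Real.exp (-(0.86 * (8.6 * L)))) := by
          refine Finset.sum_le_sum fun a hamem => ?_
          have hY : 0.86 * ((M:ℕ):ℝ) <
              ((C'.filter fun i => ∀ j ∈ t i, a j = false).card : ℝ) :=
            (Finset.mem_filter.1 hamem).2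
          have hex : 0 ≤ (8.6 * L / (M:ℝ)) *
              ((C'.filter fun i => ∀ j ∈ t i, a j = false).card : ℝ) - 0.86 * (8.6 * L) := by
            have hpos : 0 < 8.6 * L / (M:ℝ) := by positivity
            have h5 : (8.6 * L / (M:ℝ)) * (0.86 * (M:ℝ))
                ≤ (8.6 * L / (M:ℝ)) * ((C'.filter fun i => ∀ j ∈ t i, a j = false).card : ℝ) :=
              mul_le_mul_of_nonneg_left (le_of_lt hY) hpos.le
            have h6 : (8.6 * L / (M:ℝ)) * (0.86 * (M:ℝ)) = 0.86 * (8.6 * L) := by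
              have h2 : ((M:ℕ):ℝ) ≠ 0 := hMpos.ne'
              field_simp
            linarith
          have h7 : (1:ℝ) ≤ Real.exp ((8.6 * L / (M:ℝ)) *
              ((C'.filter fun i => ∀ j ∈ t i, a j = false).card : ℝ)) *
                Real.exp (-(0.86 * (8.6 * L))) := by
            rw [← Real.exp_add]
            refine Real.one_le_exp ?_
            linarith
          calc prob a = prob a * 1 := (mul_one _).symm
            _ ≤ _ := mul_le_mul_of_nonneg_left h7 (hprob0 a)
      _ ≤ ∑ a : T → Bool, prob a * (Real.exp ((8.6 * L / (M:ℝ)) *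
            ((C'.filter fun i => ∀ j ∈ t i, a j = false).card : ℝ)) *
              Real.exp (-(0.86 * (8.6 * L)))) := by
          refine Finset.sum_le_sum_of_subset_of_nonneg (Finset.filter_subset _ _)
            (fun a _ _ => ?_)
          exact mul_nonneg (hprob0 a) (mul_nonneg (Real.exp_pos _).le (Real.exp_pos _).le)
      _ = (∑ a : T → Bool, prob a * Real.exp ((8.6 * L / (M:ℝ)) *
            ((C'.filter fun i => ∀ j ∈ t i, a j = false).card : ℝ))) *
              Real.exp (-(0.86 * (8.6 * L))) := by
          rw [Finset.sum_mul]
          exact Finset.sum_congr rfl fun a _ => by ring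
      _ ≤ Real.exp (8.6 * L / 1.345) * Real.exp (-(0.86 * (8.6 * L))) :=
          mul_le_mul_of_nonneg_right hS (Real.exp_pos _).le
  refine le_trans hfinal ?_
  rw [← Real.exp_add]
  calc Real.exp (8.6 * L / 1.345 + -(0.86 * (8.6 * L))) ≤ Real.exp (-L) := by
        rw [Real.exp_le_exp]
        have h : 8.6 * L / 1.345 = (8.6/1.345) * L := by ring
        rw [h]
        nlinarith [hL0]
    _ = 1 / (n:ℝ) := by
        rw [Real.exp_neg, hLdef, Real.exp_log hn0, one_div]
end

section
/- Consider a MinConCD instance with k = 2 clusters C_1, C_2, tag universe T, tag sets t_i with |t_i| ≤ γ for all i, budget B, and coverage requirements M_1, M_2. If there exist disjoint X_1, X_2 ⊆ T with |X_1| + |X_2| ≤ B, |V_1(X_1)| ≥ M_1 and |V_2(X_2)| ≥ M_2, then there exist disjoint X'_1, X'_2 ⊆ T with |X'_1| + |X'_2| ≤ B such that ∑_{j∈X'_1}|E_1(j)| ≥ M_1 and ∑_{j∈X'_2}|E_2(j)| ≥ M_2; moreover, any such pair (X'_1, X'_2) satisfies |V_1(X'_1)| ≥ M_1/γ and |V_2(X'_2)|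 ≥ M_2/γ, i.e., it is a (1/γ, 1)-approximate solution. -/
open scoped BigOperators Classical

lemma stmt15_swap {S T : Type*} [Fintype S] [Fintype T] [DecidableEq S] [DecidableEq T]
    (C : Finset S) (t : S → Finset T) (X : Finset T) :
    ∑ j ∈ X, (C.filter fun i => j ∈ t i).card = ∑ i ∈ C, (t i ∩ X).card := by
  simp only [Finset.card_filter]
  rw [Finset.sum_comm]
  refine Finset.sum_congr rfl fun i _ => ?_
  rw [← Finset.card_filter]
  congr 1
  ext j
  simp [Finset.mem_inter, and_comm]

lemma stmt15_lower {S T : Type*} [Fintype S] [Fintype T] [DecidableEq S] [DecidableEq T]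
    (C : Finset S) (t : S → Finset T) (X : Finset T) :
    (C.filter fun i => (t i ∩ X).Nonempty).card ≤ ∑ i ∈ C, (t i ∩ X).card := by
  rw [Finset.card_filter]
  refine Finset.sum_le_sum fun i _ => ?_
  split_ifs with h
  · exact Nat.one_le_iff_ne_zero.mpr (by simpa [Finset.card_eq_zero, ← Finset.nonempty_iff_ne_empty] using h)
  · exact Nat.zero_le _

lemma stmt15_upper {S T : Type*} [Fintype S] [Fintype T] [DecidableEq S] [DecidableEq T]
    (C : Finset S) (t : S → Finset T) (X : Finset T) (γ : ℕ)
    (hγ : ∀ i : S, (t i).card ≤ γ) :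
    ∑ i ∈ C, (t i ∩ X).card ≤ γ * (C.filter fun i => (t i ∩ X).Nonempty).card := by
  have : ∑ i ∈ C, (t i ∩ X).card
      = ∑ i ∈ C.filter (fun i => (t i ∩ X).Nonempty), (t i ∩ X).card := by
    rw [Finset.sum_filter]
    refine Finset.sum_congr rfl fun i _ => ?_
    split_ifs with h
    · rfl
    · simp [Finset.not_nonempty_iff_eq_empty.mp h]
  rw [this]
  calc ∑ i ∈ C.filter (fun i => (t i ∩ X).Nonempty), (t i ∩ X).card
      ≤ ∑ _i ∈ C.filter (fun i => (t i ∩ X).Nonempty), γ :=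
        Finset.sum_le_sum fun i _ => le_trans (Finset.card_le_card (Finset.inter_subset_left)) (hγ i)
    _ = γ * _ := by rw [Finset.sum_const, smul_eq_mul, Nat.mul_comm]

/-- A MinConCD instance with two clusters `C1, C2`, tag universe `T`,
tag sets `t i` with `|t i| ≤ γ`, budget `B`, and coverage requirements `M1, M2`.  If
there exist disjoint `X1, X2 ⊆ T` with `|X1| + |X2| ≤ B`, `|V1 X1| ≥ M1` and
`|V2 X2| ≥ M2` (where `Vℓ X = {i ∈ Cℓ : t i ∩ X ≠ ∅}`), then there exist disjoint
`X'1, X'2 ⊆ T` with `|X'1| + |X'2| ≤ B`, `∑_{j ∈ X'1} |E1 j| ≥ M1` and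
`∑_{j ∈ X'2} |E2 j| ≥ M2` (where `Eℓ j = {i ∈ Cℓ : j ∈ t i}`); moreover, any such pair
satisfies `|V1 X'1| ≥ M1/γ` and `|V2 X'2| ≥ M2/γ`, i.e. it is a `(1/γ, 1)`-approximate
solution. -/
theorem stmt15 {S T : Type*} [Fintype S] [Fintype T] [DecidableEq S] [DecidableEq T]
    (C1 C2 : Finset S) (hC : Disjoint C1 C2)
    (t : S → Finset T) (γ B : ℕ)
    (hγ : ∀ i : S, (t i).card ≤ γ)
    (M1 M2 : ℝ)
    (hfeas : ∃ X1 X2 : Finset T, Disjoint X1 X2 ∧ X1.card + X2.card ≤ B ∧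
      M1 ≤ ((C1.filter fun i => (t i ∩ X1).Nonempty).card : ℝ) ∧
      M2 ≤ ((C2.filter fun i => (t i ∩ X2).Nonempty).card : ℝ)) :
    (∃ X1' X2' : Finset T, Disjoint X1' X2' ∧ X1'.card + X2'.card ≤ B ∧
      M1 ≤ ((∑ j ∈ X1', (C1.filter fun i => j ∈ t i).card : ℕ) : ℝ) ∧
      M2 ≤ ((∑ j ∈ X2', (C2.filter fun i => j ∈ t i).card : ℕ) : ℝ))
    ∧ (∀ X1' X2' : Finset T, Disjoint X1' X2' → X1'.card + X2'.card ≤ B →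
        M1 ≤ ((∑ j ∈ X1', (C1.filter fun i => j ∈ t i).card : ℕ) : ℝ) →
        M2 ≤ ((∑ j ∈ X2', (C2.filter fun i => j ∈ t i).card : ℕ) : ℝ) →
        M1 / (γ : ℝ) ≤ ((C1.filter fun i => (t i ∩ X1').Nonempty).card : ℝ) ∧
        M2 / (γ : ℝ) ≤ ((C2.filter fun i => (t i ∩ X2').Nonempty).card : ℝ)) := by
  have key : ∀ (C : Finset S) (X : Finset T) (M : ℝ),
      M ≤ ((∑ j ∈ X, (C.filter fun i => j ∈ t i).card : ℕ) : ℝ) →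
      M / (γ : ℝ) ≤ ((C.filter fun i => (t i ∩ X).Nonempty).card : ℝ) := by
    intro C X M hM
    have hup := stmt15_upper C t X γ hγ
    rw [stmt15_swap] at hM
    rcases Nat.eq_zero_or_pos γ with h0 | hpos
    · subst h0
      simp only [Nat.cast_zero, div_zero]
      exact Nat.cast_nonneg _
    · rw [div_le_iff₀ (by exact_mod_cast hpos)]
      calc M ≤ ((∑ i ∈ C, (t i ∩ X).card : ℕ) : ℝ) := hM
        _ ≤ ((γ * (C.filter fun i => (t i ∩ X).Nonempty).card : ℕ) : ℝ) := by exact_mod_cast hup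
        _ = _ := by push_cast; ring
  constructor
  · obtain ⟨X1, X2, hd, hb, h1, h2⟩ := hfeas
    refine ⟨X1, X2, hd, hb, ?_, ?_⟩
    · exact h1.trans (by rw [stmt15_swap]; exact_mod_cast stmt15_lower C1 t X1)
    · exact h2.trans (by rw [stmt15_swap]; exact_mod_cast stmt15_lower C2 t X2)
  · intro X1' X2' _ _ h1 h2
    exact ⟨key C1 X1' M1 h1, key C2 X2' M2 h2⟩
end

section
/- Consider a MinConCD instance with k = 2, budget B, and requirements M_1, M_2 > 0, with the matroid (Y, I) where Y = ∪_{j∈T}{a_j, b_j} and I = {A ⊆ Y : |A ∩ {a_j,b_j}| ≤ 1 ∀j, |A| ≤ B}, and the function F(A) = min(|V_1(X^A)|/M_1, 1) + min(|V_2(X^A)|/M_2, 1). Suppose a feasible solution exists, i.e., disjoint X_1, X_2 ⊆ T with |X_1| + |X_2| ≤ B, |V_1| ≥ M_1 and |V_2| ≥ M_2. Then max_{A∈I} F(A) = 2, and every A ∈ I with F(A) ≥ (1 − 1/e)·max_{A'∈I} F(A') yields disjoint descriptors X^A_1, X^A_2 with |X^A_1| + |X^A_2| ≤ B, |V_1(X^A)|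 ≥ (1 − 2/e)·M_1 and |V_2(X^A)| ≥ (1 − 2/e)·M_2; i.e., such an A is a (1 − 2/e, 1)-approximate solution. -/
open scoped BigOperators Classical

/-- MinConCD with `k = 2`, budget `B`, requirements `M1, M2 > 0`.
Ground set `Y = T × Bool` (with `(j, false)` playing `a_j` and `(j, true)` playing
`b_j`), matroid family `I A ↔ (at most one element of each pair) ∧ |A| ≤ B`, and
`F A = min (|V1(X^A)|/M1) 1 + min (|V2(X^A)|/M2) 1`, where `X^A_1 = {j : (j,false) ∈ A}`,
`X^A_2 = {j : (j,true) ∈ A}` and `Vℓ(X^A) = {i ∈ Cℓ : t i ∩ X^A_ℓ ≠ ∅}`.  If a feasible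
solution exists (disjoint `X1, X2` with `|X1| + |X2| ≤ B`, `|V1| ≥ M1`, `|V2| ≥ M2`),
then `max_{A ∈ I} F A = 2`, and every `A ∈ I` with `F A ≥ (1 - 1/e)·max_{A' ∈ I} F A'`
yields disjoint descriptors `X^A_1, X^A_2` with `|X^A_1| + |X^A_2| ≤ B`,
`|V1(X^A)| ≥ (1 - 2/e)·M1` and `|V2(X^A)| ≥ (1 - 2/e)·M2`, i.e. a `(1 - 2/e, 1)`-
approximate solution. -/
theorem stmt18 {S T : Type*} [Fintype S] [Fintype T] [DecidableEq S] [DecidableEq T]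
    (C1 C2 : Finset S) (hC : Disjoint C1 C2)
    (t : S → Finset T) (B : ℕ)
    (M1 M2 : ℝ) (hM1 : 0 < M1) (hM2 : 0 < M2)
    (I : Finset (T × Bool) → Prop)
    (hI : ∀ A, I A ↔
      ((∀ j : T, (A.filter fun p => p.1 = j).card ≤ 1) ∧ A.card ≤ B))
    (F : Finset (T × Bool) → ℝ)
    (hF : ∀ A, F A =
      min (((C1.filter fun i => ∃ j ∈ t i, (j, false) ∈ A).card : ℝ) / M1) 1
      + min (((C2.filter fun i => ∃ j ∈ t i, (j, true) ∈ A).card : ℝ) / M2) 1)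
    (hfeas : ∃ X1 X2 : Finset T, Disjoint X1 X2 ∧ X1.card + X2.card ≤ B ∧
      M1 ≤ ((C1.filter fun i => (t i ∩ X1).Nonempty).card : ℝ) ∧
      M2 ≤ ((C2.filter fun i => (t i ∩ X2).Nonempty).card : ℝ)) :
    ((∃ A, I A ∧ F A = 2) ∧ (∀ A, I A → F A ≤ 2))
    ∧ (∀ A : Finset (T × Bool), I A →
        (∀ A' : Finset (T × Bool), I A' → (1 - 1 / Real.exp 1) * F A' ≤ F A) →
        Disjoint (Finset.univ.filter fun j : T => (j, false) ∈ A)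
          (Finset.univ.filter fun j : T => (j, true) ∈ A)
        ∧ (Finset.univ.filter fun j : T => (j, false) ∈ A).card
            + (Finset.univ.filter fun j : T => (j, true) ∈ A).card ≤ B
        ∧ (1 - 2 / Real.exp 1) * M1 ≤
            ((C1.filter fun i => ∃ j ∈ t i, (j, false) ∈ A).card : ℝ)
        ∧ (1 - 2 / Real.exp 1) * M2 ≤
            ((C2.filter fun i => ∃ j ∈ t i, (j, true) ∈ A).card : ℝ)) := by

  obtain ⟨X1, X2, hdis, hcardB, hV1, hV2⟩ := hfeas
  classical
  set Astar : Finset (T × Bool) :=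
    X1.image (fun j => (j, false)) ∪ X2.image (fun j => (j, true)) with hAdef
  have hmemf : ∀ j : T, ((j, false) ∈ Astar ↔ j ∈ X1) := by
    intro j; simp [Astar]
  have hmemt : ∀ j : T, ((j, true) ∈ Astar ↔ j ∈ X2) := by
    intro j; simp [Astar]
  have hchar : ∀ p ∈ Astar, (p = (p.1, false) ∧ p.1 ∈ X1) ∨ (p = (p.1, true) ∧ p.1 ∈ X2) := by
    intro p hp
    simp only [Astar, Finset.mem_union, Finset.mem_image] at hp
    rcases hp with ⟨a, ha, rfl⟩ | ⟨a, ha, rfl⟩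
    · exact Or.inl ⟨rfl, ha⟩
    · exact Or.inr ⟨rfl, ha⟩
  have hIAstar : I Astar := by
    rw [hI]
    constructor
    · intro j
      rw [Finset.card_le_one]
      intro p hp q hq
      simp only [Finset.mem_filter] at hp hq
      rcases hchar p hp.1 with ⟨hp2, hpx⟩ | ⟨hp2, hpx⟩ <;>
        rcases hchar q hq.1 with ⟨hq2, hqx⟩ | ⟨hq2, hqx⟩
      · rw [hp2, hq2, hp.2, hq.2]
      · exact absurd (hdis.forall_ne_finset (hp.2 ▸ hpx) (hq.2 ▸ hqx) rfl) (fun h => h)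
      · exact absurd (hdis.forall_ne_finset (hq.2 ▸ hqx) (hp.2 ▸ hpx) rfl) (fun h => h)
      · rw [hp2, hq2, hp.2, hq.2]
    · have hinj1 : Function.Injective (fun j : T => (j, false)) := by
        intro a b h; simpa using h
      have hinj2 : Function.Injective (fun j : T => (j, true)) := by
        intro a b h; simpa using h
      have hdisim : Disjoint (X1.image (fun j => (j, false)))
          (X2.image (fun j => (j, true))) := by
        rw [Finset.disjoint_left]
        intro p hp hq
        simp only [Finset.mem_image] at hp hq
        obtain ⟨a, _, rfl⟩ := hp
        obtain ⟨b, _, hb⟩ := hq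
        exact Bool.false_ne_true (congrArg Prod.snd hb).symm
      calc Astar.card = (X1.image (fun j => (j, false))).card
            + (X2.image (fun j => (j, true))).card := Finset.card_union_of_disjoint hdisim
        _ = X1.card + X2.card := by
            rw [Finset.card_image_of_injective _ hinj1, Finset.card_image_of_injective _ hinj2]
        _ ≤ B := hcardB
  have hFA2 : F Astar = 2 := by
    rw [hF]
    have e1 : (C1.filter fun i => ∃ j ∈ t i, (j, false) ∈ Astar)
        = (C1.filter fun i => (t i ∩ X1).Nonempty) := by
      apply Finset.filter_congr
      intro i _
      simp only [hmemf, Finset.Nonempty, Finset.mem_inter]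
    have e2 : (C2.filter fun i => ∃ j ∈ t i, (j, true) ∈ Astar)
        = (C2.filter fun i => (t i ∩ X2).Nonempty) := by
      apply Finset.filter_congr
      intro i _
      simp only [hmemt, Finset.Nonempty, Finset.mem_inter]
    rw [e1, e2]
    have h1 : (1:ℝ) ≤ ((C1.filter fun i => (t i ∩ X1).Nonempty).card : ℝ) / M1 :=
      (one_le_div hM1).mpr hV1
    have h2 : (1:ℝ) ≤ ((C2.filter fun i => (t i ∩ X2).Nonempty).card : ℝ) / M2 :=
      (one_le_div hM2).mpr hV2
    rw [min_eq_right h1, min_eq_right h2]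
    norm_num
  have hub : ∀ A, I A → F A ≤ 2 := by
    intro A _
    rw [hF]
    have := min_le_right (((C1.filter fun i => ∃ j ∈ t i, (j, false) ∈ A).card : ℝ) / M1) 1
    have := min_le_right (((C2.filter fun i => ∃ j ∈ t i, (j, true) ∈ A).card : ℝ) / M2) 1
    linarith
  refine ⟨⟨⟨Astar, hIAstar, hFA2⟩, hub⟩, ?_⟩
  intro A hA hmax
  have hpair := ((hI A).mp hA).1
  have hcardA := ((hI A).mp hA).2
  have hdisA : Disjoint (Finset.univ.filter fun j : T => (j, false) ∈ A)
      (Finset.univ.filter fun j : T => (j, true) ∈ A) := by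
    rw [Finset.disjoint_left]
    intro j hjf hjt
    simp only [Finset.mem_filter, Finset.mem_univ, true_and] at hjf hjt
    have hsub : ({((j : T), false), ((j : T), true)} : Finset (T × Bool))
        ⊆ A.filter fun p => p.1 = j := by
      intro p hp
      simp only [Finset.mem_insert, Finset.mem_singleton] at hp
      rcases hp with rfl | rfl <;> simp [Finset.mem_filter, hjf, hjt]
    have h2le : 2 ≤ (A.filter fun p => p.1 = j).card := by
      have := Finset.card_le_card hsub
      rwa [Finset.card_pair (by simp)] at this
    have := hpair j
    omega
  refine ⟨hdisA, ?_, ?_, ?_⟩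
  · -- cardinality bound
    have hcf : (Finset.univ.filter fun j : T => (j, false) ∈ A).card
        = (A.filter fun p => p.2 = false).card := by
      apply Finset.card_bij' (fun j _ => (j, false)) (fun p _ => p.1)
      · intro j hj
        simp only [Finset.mem_filter, Finset.mem_univ, true_and] at hj
        simp [Finset.mem_filter, hj]
      · intro p hp
        simp only [Finset.mem_filter] at hp
        simp only [Finset.mem_filter, Finset.mem_univ, true_and]
        have : p = (p.1, false) := by
          rw [← hp.2]
        rw [← this]; exact hp.1
      · intro j hj; rfl
      · intro p hp
        simp only [Finset.mem_filter] at hp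
        rw [← hp.2]
    have hct : (Finset.univ.filter fun j : T => (j, true) ∈ A).card
        = (A.filter fun p => p.2 = true).card := by
      apply Finset.card_bij' (fun j _ => (j, true)) (fun p _ => p.1)
      · intro j hj
        simp only [Finset.mem_filter, Finset.mem_univ, true_and] at hj
        simp [Finset.mem_filter, hj]
      · intro p hp
        simp only [Finset.mem_filter] at hp
        simp only [Finset.mem_filter, Finset.mem_univ, true_and]
        have : p = (p.1, true) := by
          rw [← hp.2]
        rw [← this]; exact hp.1
      · intro j hj; rfl
      · intro p hp
        simp only [Finset.mem_filter] at hp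
        rw [← hp.2]
    have hsplit : (A.filter fun p => p.2 = false).card
        + (A.filter fun p => p.2 = true).card = A.card := by
      have := Finset.card_filter_add_card_filter_not
        (s := A) (p := fun p : T × Bool => p.2 = false)
      simpa [Bool.not_eq_false] using this
    rw [hcf, hct, hsplit]
    exact hcardA
  all_goals {
    have hFge : (1 - 1 / Real.exp 1) * 2 ≤ F A := by
      have := hmax Astar hIAstar
      rwa [hFA2] at this
    rw [hF] at hFge
    have hm1le := min_le_left (((C1.filter fun i => ∃ j ∈ t i, (j, false) ∈ A).card : ℝ) / M1) 1
    have hm1le1 := min_le_right (((C1.filter fun i => ∃ j ∈ t i, (j, false) ∈ A).card : ℝ) / M1) 1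
    have hm2le := min_le_left (((C2.filter fun i => ∃ j ∈ t i, (j, true) ∈ A).card : ℝ) / M2) 1
    have hm2le1 := min_le_right (((C2.filter fun i => ∃ j ∈ t i, (j, true) ∈ A).card : ℝ) / M2) 1
    have hediv : (1:ℝ) / Real.exp 1 + 1 / Real.exp 1 = 2 / Real.exp 1 := by ring
    first
    | { have hd : (1 - 2 / Real.exp 1 : ℝ)
            ≤ ((C1.filter fun i => ∃ j ∈ t i, (j, false) ∈ A).card : ℝ) / M1 := by
          linarith
        calc (1 - 2 / Real.exp 1) * M1
            ≤ (((C1.filter fun i => ∃ j ∈ t i, (j, false) ∈ A).card : ℝ) / M1) * M1 := by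
              exact mul_le_mul_of_nonneg_right hd (le_of_lt hM1)
          _ = ((C1.filter fun i => ∃ j ∈ t i, (j, false) ∈ A).card : ℝ) := by
              field_simp }
    | { have hd : (1 - 2 / Real.exp 1 : ℝ)
            ≤ ((C2.filter fun i => ∃ j ∈ t i, (j, true) ∈ A).card : ℝ) / M2 := by
          linarith
        calc (1 - 2 / Real.exp 1) * M2
            ≤ (((C2.filter fun i => ∃ j ∈ t i, (j, true) ∈ A).card : ℝ) / M2) * M2 := by
              exact mul_le_mul_of_nonneg_right hd (le_of_lt hM2)
          _ = ((C2.filter fun i => ∃ j ∈ t i, (j, true) ∈ A).card : ℝ) := by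
              field_simp }
  }
end
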